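/- Fix N ≥ 1. The pairwise spin-gas joint distribution P is the unique strictly positive probability mass function Q on {−1,+1}^N × {−1,+1}^N whose full conditionals satisfy, for every i and every (σ, τ): Q(τ_i = ε | σ, τ_{−i}) = exp(ε Γ_i(σ)) / (2 cosh Γ_i(σ)) and Q(σ_i = ε | σ_{−i}, τ) = exp(ε Γ̄_i(σ_{−i}, τ)) / (2 cosh Γ̄_i(σ_{−i}, τ)) for ε ∈ {−1,+1}, where Γ̄_i(σ_{−i}, τ) = h_i + Σ_{j ≠ i} J_{ij} σ_j + Σ_{m=1}^N τ_m ( J̃_{mi} + (c/δt) G¹_{mi} + (c/δt²) G²_{mi} ). -/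

import Mathlib

open Real Finset

noncomputable section

/-- Real value of a Boolean spin: `true ↦ 1`, `false ↦ -1`. -/
def spinVal (b : Bool) : ℝ := if b then 1 else -1

/-- Discrete momentum `p_j(σ) = c (σ_j − s_j) / δt`. -/
def mom (N : ℕ) (c δt : ℝ) (s σ : Fin N → Bool) (j : Fin N) : ℝ :=
  c * (spinVal (σ j) - spinVal (s j)) / δt

/-- Discrete acceleration `a_j(σ) = (p_j(σ) − p′_j) / δt`. -/
def acc (N : ℕ) (c δt : ℝ) (s : Fin N → Bool) (p' : Fin N → ℝ) (σ : Fin N → Bool)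
    (j : Fin N) : ℝ :=
  (mom N c δt s σ j - p' j) / δt

/-- Spin-gas effective local field
`Γ_i(σ) = h̃_i + Σ_j J̃_{ij} σ_j + Σ_j G¹_{ij} p_j(σ) + Σ_j G²_{ij} a_j(σ)`. -/
def Gamma (N : ℕ) (c δt : ℝ) (s : Fin N → Bool) (p' : Fin N → ℝ) (htil : Fin N → ℝ)
    (Jtil G1 G2 : Fin N → Fin N → ℝ) (σ : Fin N → Bool) (i : Fin N) : ℝ :=
  htil i + (∑ j, Jtil i j * spinVal (σ j)) + (∑ j, G1 i j * mom N c δt s σ j)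
    + ∑ j, G2 i j * acc N c δt s p' σ j

/-- Energy of the pairwise spin-gas joint distribution:
`Σ_i h_i σ_i + Σ_{i<j} J_{ij} σ_i σ_j + Σ_i τ_i Γ_i(σ)`. -/
def sgEnergy (N : ℕ) (c δt : ℝ) (s : Fin N → Bool) (p' : Fin N → ℝ) (h htil : Fin N → ℝ)
    (J Jtil G1 G2 : Fin N → Fin N → ℝ) (στ : (Fin N → Bool) × (Fin N → Bool)) : ℝ :=
  (∑ i, h i * spinVal (στ.1 i))
    + (∑ i, ∑ j, if i < j then J i j * spinVal (στ.1 i) * spinVal (στ.1 j) else 0)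
    + ∑ i, spinVal (στ.2 i) * Gamma N c δt s p' htil Jtil G1 G2 στ.1 i

/-- The pairwise spin-gas joint distribution
`P(σ,τ) = Z⁻¹ exp(Σ_i h_i σ_i + Σ_{i<j} J_{ij} σ_i σ_j + Σ_i τ_i Γ_i(σ))`. -/
def sgP (N : ℕ) (c δt : ℝ) (s : Fin N → Bool) (p' : Fin N → ℝ) (h htil : Fin N → ℝ)
    (J Jtil G1 G2 : Fin N → Fin N → ℝ) (στ : (Fin N → Bool) × (Fin N → Bool)) : ℝ :=
  Real.exp (sgEnergy N c δt s p' h htil J Jtil G1 G2 στ)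
    / ∑ στ' : (Fin N → Bool) × (Fin N → Bool),
        Real.exp (sgEnergy N c δt s p' h htil J Jtil G1 G2 στ')

/-- Effective field for the time-t spins:
`Γ̄_i(σ_{−i}, τ) = h_i + Σ_{j≠i} J_{ij} σ_j + Σ_m τ_m (J̃_{mi} + (c/δt) G¹_{mi} + (c/δt²) G²_{mi})`. -/
def GammaBar (N : ℕ) (c δt : ℝ) (h : Fin N → ℝ) (J Jtil G1 G2 : Fin N → Fin N → ℝ)
    (σ τ : Fin N → Bool) (i : Fin N) : ℝ :=
  h i + (∑ j ∈ Finset.univ.filter (fun j => j ≠ i), J i j * spinVal (σ j))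
    + ∑ m, spinVal (τ m) * (Jtil m i + (c / δt) * G1 m i + (c / δt ^ 2) * G2 m i)


lemma sum_eq_of_eq_off {N : ℕ} (f g : Fin N → ℝ) (i : Fin N) (hfg : ∀ j, j ≠ i → f j = g j) :
    ∑ j, f j = (∑ j, g j) + (f i - g i) := by
  rw [← Finset.add_sum_erase _ f (Finset.mem_univ i),
      ← Finset.add_sum_erase _ g (Finset.mem_univ i),
      Finset.sum_congr rfl (fun j hj => hfg j (Finset.ne_of_mem_erase hj))]
  ring

lemma ratio_lemma (g B : ℝ) (F : Bool → ℝ) (hF : ∀ ε, F ε = B + spinVal ε * g) (ε : Bool) :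
    Real.exp (F ε) / (∑ b : Bool, Real.exp (F b))
      = Real.exp (spinVal ε * g) / (2 * Real.cosh g) := by
  have hsum : ∑ b : Bool, Real.exp (F b) = Real.exp B * (2 * Real.cosh g) := by
    rw [Fintype.sum_bool, hF true, hF false]
    simp only [spinVal, if_true, if_false, Bool.false_eq_true, Real.cosh_eq, Real.exp_add]
    ring
  rw [hsum, hF, Real.exp_add, mul_div_mul_left _ _ (Real.exp_ne_zero B)]

lemma update_const {N : ℕ} (f : (Fin N → Bool) → ℝ)
    (hf : ∀ τ i ε, f (Function.update τ i ε) = f τ) (τ τ' : Fin N → Bool) : f τ = f τ' := by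
  have key : ∀ S : Finset (Fin N), ∀ τ τ' : Fin N → Bool,
      (∀ j, j ∉ S → τ j = τ' j) → f τ = f τ' := by
    intro S
    induction S using Finset.induction_on with
    | empty =>
      intro τ τ' hagree
      congr 1
      funext j
      exact hagree j (by simp)
    | @insert a S ha ih =>
      intro τ τ' hagree
      rw [← hf τ a (τ' a)]
      apply ih
      intro j hj
      by_cases hja : j = a
      · subst hja; simp
      · rw [Function.update_of_ne hja]
        exact hagree j (by simp [hja, hj])
  exact key univ τ τ' (fun j hj => absurd (Finset.mem_univ j) hj)

variable {N : ℕ} (c δt : ℝ) (s : Fin N → Bool) (p' : Fin N → ℝ) (h htil : Fin N → ℝ)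
  (J Jtil G1 G2 : Fin N → Fin N → ℝ)

lemma Gamma_update (hδt : δt ≠ 0) (σ : Fin N → Bool) (i : Fin N) (ε : Bool) (m : Fin N) :
    Gamma N c δt s p' htil Jtil G1 G2 (Function.update σ i ε) m
      = Gamma N c δt s p' htil Jtil G1 G2 σ m
        + (spinVal ε - spinVal (σ i))
            * (Jtil m i + (c / δt) * G1 m i + (c / δt ^ 2) * G2 m i) := by
  unfold _root_.Gamma
  rw [sum_eq_of_eq_off (fun j => Jtil m j * spinVal (Function.update σ i ε j))
        (fun j => Jtil m j * spinVal (σ j)) i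
        (fun j hj => by simp [Function.update_of_ne hj]),
      sum_eq_of_eq_off (fun j => G1 m j * mom N c δt s (Function.update σ i ε) j)
        (fun j => G1 m j * mom N c δt s σ j) i
        (fun j hj => by simp [mom, Function.update_of_ne hj]),
      sum_eq_of_eq_off (fun j => G2 m j * acc N c δt s p' (Function.update σ i ε) j)
        (fun j => G2 m j * acc N c δt s p' σ j) i
        (fun j hj => by simp [acc, mom, Function.update_of_ne hj])]
  unfold acc mom
  rw [Function.update_self]
  ring

lemma energy_update_tau (σ τ : Fin N → Bool) (i : Fin N) (ε : Bool) :
    sgEnergy N c δt s p' h htil J Jtil G1 G2 (σ, Function.update τ i ε)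
      = sgEnergy N c δt s p' h htil J Jtil G1 G2 (σ, τ)
        + (spinVal ε - spinVal (τ i)) * Gamma N c δt s p' htil Jtil G1 G2 σ i := by
  unfold sgEnergy
  simp only
  rw [sum_eq_of_eq_off
        (fun m => spinVal (Function.update τ i ε m) * Gamma N c δt s p' htil Jtil G1 G2 σ m)
        (fun m => spinVal (τ m) * Gamma N c δt s p' htil Jtil G1 G2 σ m) i
        (fun j hj => by simp [Function.update_of_ne hj])]
  rw [Function.update_self]
  ring

lemma pair_update (hJsym : ∀ i j, J i j = J j i) (σ : Fin N → Bool) (i : Fin N) (ε : Bool) :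
    (∑ m, ∑ j, if m < j then J m j * spinVal (Function.update σ i ε m)
        * spinVal (Function.update σ i ε j) else 0)
      = (∑ m, ∑ j, if m < j then J m j * spinVal (σ m) * spinVal (σ j) else 0)
        + (spinVal ε - spinVal (σ i))
            * ∑ j ∈ Finset.univ.filter (fun j => j ≠ i), J i j * spinVal (σ j) := by
  have key : ∀ m j : Fin N, (if m < j then J m j * spinVal (Function.update σ i ε m)
        * spinVal (Function.update σ i ε j) else 0)
      = (if m < j then J m j * spinVal (σ m) * spinVal (σ j) else 0)
        + ((if m = i ∧ m < j then J m j * (spinVal ε - spinVal (σ i)) * spinVal (σ j) else 0)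
          + (if j = i ∧ m < j then J m j * spinVal (σ m) * (spinVal ε - spinVal (σ i))
              else 0)) := by
    intro m j
    rcases eq_or_ne m i with hm | hm
    · subst hm
      rcases eq_or_ne j m with hj | hj
      · subst hj; simp [lt_irrefl]
      · by_cases hmj : m < j
        · simp only [hmj, if_true, true_and, hj, false_and, if_false, and_true, and_false,
            Function.update_self, Function.update_of_ne hj, eq_self_iff_true, add_zero]
          ring
        · simp [hmj]
    · rcases eq_or_ne j i with hj | hj
      · subst hj
        by_cases hmj : m < j
        · simp only [hmj, if_true, hm, false_and, if_false, and_true, true_and,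
            Function.update_self, Function.update_of_ne hm, eq_self_iff_true, zero_add]
          ring
        · simp [hmj]
      · by_cases hmj : m < j
        · simp [hmj, hm, hj, Function.update_of_ne hm, Function.update_of_ne hj]
        · simp [hmj]
  calc (∑ m, ∑ j, if m < j then J m j * spinVal (Function.update σ i ε m)
        * spinVal (Function.update σ i ε j) else 0)
      = (∑ m, ∑ j, if m < j then J m j * spinVal (σ m) * spinVal (σ j) else 0)
        + ((∑ m, ∑ j, if m = i ∧ m < j then J m j * (spinVal ε - spinVal (σ i))
              * spinVal (σ j) else 0)
          + (∑ m, ∑ j, if j = i ∧ m < j then J m j * spinVal (σ m)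
              * (spinVal ε - spinVal (σ i)) else 0)) := by
        simp only [key, Finset.sum_add_distrib]
    _ = (∑ m, ∑ j, if m < j then J m j * spinVal (σ m) * spinVal (σ j) else 0)
        + (spinVal ε - spinVal (σ i))
            * ∑ j ∈ Finset.univ.filter (fun j => j ≠ i), J i j * spinVal (σ j) := by
        congr 1
        have hA : (∑ m, ∑ j, if m = i ∧ m < j then J m j * (spinVal ε - spinVal (σ i))
              * spinVal (σ j) else 0)
            = ∑ j, if i < j then J i j * (spinVal ε - spinVal (σ i)) * spinVal (σ j) else 0 := by
          rw [Finset.sum_eq_single i]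
          · simp
          · intro m _ hm
            exact Finset.sum_eq_zero fun j _ => by simp [hm]
          · intro hi; exact absurd (Finset.mem_univ i) hi
        have hB : (∑ m, ∑ j, if j = i ∧ m < j then J m j * spinVal (σ m)
              * (spinVal ε - spinVal (σ i)) else 0)
            = ∑ m, if m < i then J m i * spinVal (σ m) * (spinVal ε - spinVal (σ i)) else 0 := by
          refine Finset.sum_congr rfl fun m _ => ?_
          rw [Finset.sum_eq_single i]
          · simp
          · intro j _ hj; simp [hj]
          · intro hi; exact absurd (Finset.mem_univ i) hi
        rw [hA, hB, Finset.mul_sum, Finset.sum_filter, ← Finset.sum_add_distrib]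
        refine Finset.sum_congr rfl fun j _ => ?_
        rcases lt_trichotomy j i with hj | hj | hj
        · simp only [hj, if_true, (asymm hj : ¬ i < j), if_false, hj.ne, ne_eq,
            not_false_iff, hJsym j i]
          ring
        · subst hj; simp [lt_irrefl]
        · simp only [hj, if_true, (asymm hj : ¬ j < i), if_false, hj.ne', ne_eq,
            not_false_iff]
          ring

lemma energy_update_sigma (hδt : δt ≠ 0) (hJsym : ∀ i j, J i j = J j i)
    (σ τ : Fin N → Bool) (i : Fin N) (ε : Bool) :
    sgEnergy N c δt s p' h htil J Jtil G1 G2 (Function.update σ i ε, τ)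
      = sgEnergy N c δt s p' h htil J Jtil G1 G2 (σ, τ)
        + (spinVal ε - spinVal (σ i)) * GammaBar N c δt h J Jtil G1 G2 σ τ i := by
  have htau : (∑ m, spinVal (τ m)
        * _root_.Gamma N c δt s p' htil Jtil G1 G2 (Function.update σ i ε) m)
      = (∑ m, spinVal (τ m) * _root_.Gamma N c δt s p' htil Jtil G1 G2 σ m)
        + (spinVal ε - spinVal (σ i))
            * ∑ m, spinVal (τ m) * (Jtil m i + (c / δt) * G1 m i + (c / δt ^ 2) * G2 m i) := by
    simp only [Gamma_update c δt s p' htil Jtil G1 G2 hδt σ i ε, mul_add]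
    rw [Finset.sum_add_distrib, Finset.mul_sum]
    congr 1
    exact Finset.sum_congr rfl fun m _ => by ring
  unfold sgEnergy
  simp only
  rw [sum_eq_of_eq_off (fun m => h m * spinVal (Function.update σ i ε m))
        (fun m => h m * spinVal (σ m)) i (fun j hj => by simp [Function.update_of_ne hj]),
      Function.update_self, pair_update J hJsym σ i ε, htau]
  unfold GammaBar
  ring


/-- The pairwise spin-gas joint distribution is the unique strictly positive
pmf on `{−1,+1}^N × {−1,+1}^N` whose full conditionals of `τ_i` are the spin-gas Glauber
kernels with fields `Γ_i(σ)`, and whose full conditionals of `σ_i` are Glauber kernels with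
effective fields `Γ̄_i(σ_{−i}, τ)`. -/

lemma sgZ_pos : 0 < ∑ στ' : (Fin N → Bool) × (Fin N → Bool),
    Real.exp (sgEnergy N c δt s p' h htil J Jtil G1 G2 στ') :=
  Finset.sum_pos (fun στ' _ => Real.exp_pos _) Finset.univ_nonempty

lemma sgP_pos : ∀ στ, 0 < sgP N c δt s p' h htil J Jtil G1 G2 στ :=
  fun _ => div_pos (Real.exp_pos _) (sgZ_pos c δt s p' h htil J Jtil G1 G2)

lemma sgP_sum : (∑ στ : (Fin N → Bool) × (Fin N → Bool),
    sgP N c δt s p' h htil J Jtil G1 G2 στ) = 1 := by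
  unfold sgP
  rw [← Finset.sum_div, div_self (sgZ_pos c δt s p' h htil J Jtil G1 G2).ne']

lemma sgP_cond (u : Bool → (Fin N → Bool) × (Fin N → Bool)) (ε : Bool) :
    sgP N c δt s p' h htil J Jtil G1 G2 (u ε)
        / (∑ b : Bool, sgP N c δt s p' h htil J Jtil G1 G2 (u b))
      = Real.exp (sgEnergy N c δt s p' h htil J Jtil G1 G2 (u ε))
        / (∑ b : Bool, Real.exp (sgEnergy N c δt s p' h htil J Jtil G1 G2 (u b))) := by
  unfold sgP
  rw [← Finset.sum_div, div_div_div_cancel_right₀]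
  exact (sgZ_pos c δt s p' h htil J Jtil G1 G2).ne'

lemma sgP_tau : ∀ (i : Fin N) (σ τ : Fin N → Bool) (ε : Bool),
    sgP N c δt s p' h htil J Jtil G1 G2 (σ, Function.update τ i ε)
        / (∑ b : Bool, sgP N c δt s p' h htil J Jtil G1 G2 (σ, Function.update τ i b))
      = Real.exp (spinVal ε * Gamma N c δt s p' htil Jtil G1 G2 σ i)
        / (2 * Real.cosh (Gamma N c δt s p' htil Jtil G1 G2 σ i)) := by
  intro i σ τ ε
  have hF : ∀ b : Bool, sgEnergy N c δt s p' h htil J Jtil G1 G2 (σ, Function.update τ i b)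
      = (sgEnergy N c δt s p' h htil J Jtil G1 G2 (σ, τ)
          - spinVal (τ i) * Gamma N c δt s p' htil Jtil G1 G2 σ i)
        + spinVal b * Gamma N c δt s p' htil Jtil G1 G2 σ i := by
    intro b
    rw [energy_update_tau]
    ring
  exact (sgP_cond c δt s p' h htil J Jtil G1 G2 (fun b => (σ, Function.update τ i b)) ε).trans
    (ratio_lemma _ _ (fun b => sgEnergy N c δt s p' h htil J Jtil G1 G2
      (σ, Function.update τ i b)) hF ε)

lemma sgP_sig (hδt : δt ≠ 0) (hJsym : ∀ i j, J i j = J j i) :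
    ∀ (i : Fin N) (σ τ : Fin N → Bool) (ε : Bool),
    sgP N c δt s p' h htil J Jtil G1 G2 (Function.update σ i ε, τ)
        / (∑ b : Bool, sgP N c δt s p' h htil J Jtil G1 G2 (Function.update σ i b, τ))
      = Real.exp (spinVal ε * GammaBar N c δt h J Jtil G1 G2 σ τ i)
        / (2 * Real.cosh (GammaBar N c δt h J Jtil G1 G2 σ τ i)) := by
  intro i σ τ ε
  have hF : ∀ b : Bool, sgEnergy N c δt s p' h htil J Jtil G1 G2 (Function.update σ i b, τ)
      = (sgEnergy N c δt s p' h htil J Jtil G1 G2 (σ, τ)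
          - spinVal (σ i) * GammaBar N c δt h J Jtil G1 G2 σ τ i)
        + spinVal b * GammaBar N c δt h J Jtil G1 G2 σ τ i := by
    intro b
    rw [energy_update_sigma c δt s p' h htil J Jtil G1 G2 hδt hJsym]
    ring
  exact (sgP_cond c δt s p' h htil J Jtil G1 G2 (fun b => (Function.update σ i b, τ)) ε).trans
    (ratio_lemma _ _ (fun b => sgEnergy N c δt s p' h htil J Jtil G1 G2
      (Function.update σ i b, τ)) hF ε)


set_option maxHeartbeats 1000000 in
theorem spin_gas_joint_unique
    (N : ℕ) (hN : 1 ≤ N) (c δt : ℝ) (hc : 0 < c) (hδt : 0 < δt)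
    (s : Fin N → Bool) (p' : Fin N → ℝ) (h htil : Fin N → ℝ)
    (J Jtil G1 G2 : Fin N → Fin N → ℝ)
    (hJsym : ∀ i j, J i j = J j i) (hJdiag : ∀ i, J i i = 0)
    (hJtsym : ∀ i j, Jtil i j = Jtil j i) (hJtdiag : ∀ i, Jtil i i = 0) :
    ((∀ στ, 0 < sgP N c δt s p' h htil J Jtil G1 G2 στ)
      ∧ (∑ στ : (Fin N → Bool) × (Fin N → Bool), sgP N c δt s p' h htil J Jtil G1 G2 στ) = 1
      ∧ (∀ (i : Fin N) (σ τ : Fin N → Bool) (ε : Bool),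
          sgP N c δt s p' h htil J Jtil G1 G2 (σ, Function.update τ i ε)
              / (∑ b : Bool, sgP N c δt s p' h htil J Jtil G1 G2 (σ, Function.update τ i b))
            = Real.exp (spinVal ε * Gamma N c δt s p' htil Jtil G1 G2 σ i)
              / (2 * Real.cosh (Gamma N c δt s p' htil Jtil G1 G2 σ i)))
      ∧ (∀ (i : Fin N) (σ τ : Fin N → Bool) (ε : Bool),
          sgP N c δt s p' h htil J Jtil G1 G2 (Function.update σ i ε, τ)
              / (∑ b : Bool, sgP N c δt s p' h htil J Jtil G1 G2 (Function.update σ i b, τ))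
            = Real.exp (spinVal ε * GammaBar N c δt h J Jtil G1 G2 σ τ i)
              / (2 * Real.cosh (GammaBar N c δt h J Jtil G1 G2 σ τ i))))
    ∧ (∀ Q : (Fin N → Bool) × (Fin N → Bool) → ℝ,
        (∀ στ, 0 < Q στ) →
        (∑ στ : (Fin N → Bool) × (Fin N → Bool), Q στ) = 1 →
        (∀ (i : Fin N) (σ τ : Fin N → Bool) (ε : Bool),
          Q (σ, Function.update τ i ε) / (∑ b : Bool, Q (σ, Function.update τ i b))
            = Real.exp (spinVal ε * Gamma N c δt s p' htil Jtil G1 G2 σ i)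
              / (2 * Real.cosh (Gamma N c δt s p' htil Jtil G1 G2 σ i))) →
        (∀ (i : Fin N) (σ τ : Fin N → Bool) (ε : Bool),
          Q (Function.update σ i ε, τ) / (∑ b : Bool, Q (Function.update σ i b, τ))
            = Real.exp (spinVal ε * GammaBar N c δt h J Jtil G1 G2 σ τ i)
              / (2 * Real.cosh (GammaBar N c δt h J Jtil G1 G2 σ τ i))) →
        Q = sgP N c δt s p' h htil J Jtil G1 G2) := by
  have hδt' : δt ≠ 0 := hδt.ne'
  have hPpos := sgP_pos c δt s p' h htil J Jtil G1 G2
  have hPsum := sgP_sum c δt s p' h htil J Jtil G1 G2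
  have hPtau := sgP_tau c δt s p' h htil J Jtil G1 G2
  have hPsig := sgP_sig c δt s p' h htil J Jtil G1 G2 hδt' hJsym
  refine ⟨⟨hPpos, hPsum, hPtau, hPsig⟩, ?_⟩
  intro Q hQpos hQsum hQτ hQσ
  have crossτ : ∀ (σ τ : Fin N → Bool) (i : Fin N) (ε : Bool),
      Q (σ, Function.update τ i ε) * sgP N c δt s p' h htil J Jtil G1 G2 (σ, τ)
        = Q (σ, τ) * sgP N c δt s p' h htil J Jtil G1 G2 (σ, Function.update τ i ε) := by
    intro σ τ i ε
    have hSQ : (0:ℝ) < ∑ b : Bool, Q (σ, Function.update τ i b) :=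
      Finset.sum_pos (fun b _ => hQpos _) Finset.univ_nonempty
    have hSP : (0:ℝ) < ∑ b : Bool,
        sgP N c δt s p' h htil J Jtil G1 G2 (σ, Function.update τ i b) :=
      Finset.sum_pos (fun b _ => hPpos _) Finset.univ_nonempty
    have hq : ∀ ε : Bool, Q (σ, Function.update τ i ε)
        = (Real.exp (spinVal ε * Gamma N c δt s p' htil Jtil G1 G2 σ i)
            / (2 * Real.cosh (Gamma N c δt s p' htil Jtil G1 G2 σ i)))
          * (∑ b : Bool, Q (σ, Function.update τ i b)) :=
      fun ε => by rw [← hQτ i σ τ ε, div_mul_cancel₀ _ hSQ.ne']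
    have hp : ∀ ε : Bool, sgP N c δt s p' h htil J Jtil G1 G2 (σ, Function.update τ i ε)
        = (Real.exp (spinVal ε * Gamma N c δt s p' htil Jtil G1 G2 σ i)
            / (2 * Real.cosh (Gamma N c δt s p' htil Jtil G1 G2 σ i)))
          * (∑ b : Bool, sgP N c δt s p' h htil J Jtil G1 G2 (σ, Function.update τ i b)) :=
      fun ε => by rw [← hPtau i σ τ ε, div_mul_cancel₀ _ hSP.ne']
    have hq' := hq (τ i)
    have hp' := hp (τ i)
    rw [Function.update_eq_self] at hq' hp'
    rw [hq ε, hp ε, hq', hp']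
    ring
  have crossσ : ∀ (σ τ : Fin N → Bool) (i : Fin N) (ε : Bool),
      Q (Function.update σ i ε, τ) * sgP N c δt s p' h htil J Jtil G1 G2 (σ, τ)
        = Q (σ, τ) * sgP N c δt s p' h htil J Jtil G1 G2 (Function.update σ i ε, τ) := by
    intro σ τ i ε
    have hSQ : (0:ℝ) < ∑ b : Bool, Q (Function.update σ i b, τ) :=
      Finset.sum_pos (fun b _ => hQpos _) Finset.univ_nonempty
    have hSP : (0:ℝ) < ∑ b : Bool,
        sgP N c δt s p' h htil J Jtil G1 G2 (Function.update σ i b, τ) :=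
      Finset.sum_pos (fun b _ => hPpos _) Finset.univ_nonempty
    have hq : ∀ ε : Bool, Q (Function.update σ i ε, τ)
        = (Real.exp (spinVal ε * GammaBar N c δt h J Jtil G1 G2 σ τ i)
            / (2 * Real.cosh (GammaBar N c δt h J Jtil G1 G2 σ τ i)))
          * (∑ b : Bool, Q (Function.update σ i b, τ)) :=
      fun ε => by rw [← hQσ i σ τ ε, div_mul_cancel₀ _ hSQ.ne']
    have hp : ∀ ε : Bool, sgP N c δt s p' h htil J Jtil G1 G2 (Function.update σ i ε, τ)
        = (Real.exp (spinVal ε * GammaBar N c δt h J Jtil G1 G2 σ τ i)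
            / (2 * Real.cosh (GammaBar N c δt h J Jtil G1 G2 σ τ i)))
          * (∑ b : Bool, sgP N c δt s p' h htil J Jtil G1 G2 (Function.update σ i b, τ)) :=
      fun ε => by rw [← hPsig i σ τ ε, div_mul_cancel₀ _ hSP.ne']
    have hq' := hq (σ i)
    have hp' := hp (σ i)
    rw [Function.update_eq_self] at hq' hp'
    rw [hq ε, hp ε, hq', hp']
    ring
  have Rτ : ∀ (σ τ : Fin N → Bool) (i : Fin N) (ε : Bool),
      Q (σ, Function.update τ i ε) / sgP N c δt s p' h htil J Jtil G1 G2 (σ, Function.update τ i ε)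
        = Q (σ, τ) / sgP N c δt s p' h htil J Jtil G1 G2 (σ, τ) := by
    intro σ τ i ε
    rw [div_eq_div_iff (hPpos _).ne' (hPpos _).ne']
    exact crossτ σ τ i ε
  have Rσ : ∀ (σ τ : Fin N → Bool) (i : Fin N) (ε : Bool),
      Q (Function.update σ i ε, τ) / sgP N c δt s p' h htil J Jtil G1 G2 (Function.update σ i ε, τ)
        = Q (σ, τ) / sgP N c δt s p' h htil J Jtil G1 G2 (σ, τ) := by
    intro σ τ i ε
    rw [div_eq_div_iff (hPpos _).ne' (hPpos _).ne']
    exact crossσ σ τ i ε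
  have hconst : ∀ a b : (Fin N → Bool) × (Fin N → Bool),
      Q a / sgP N c δt s p' h htil J Jtil G1 G2 a
        = Q b / sgP N c δt s p' h htil J Jtil G1 G2 b := by
    intro a b
    have h1 : Q (a.1, a.2) / sgP N c δt s p' h htil J Jtil G1 G2 (a.1, a.2)
        = Q (a.1, b.2) / sgP N c δt s p' h htil J Jtil G1 G2 (a.1, b.2) :=
      update_const (fun τ => Q (a.1, τ) / sgP N c δt s p' h htil J Jtil G1 G2 (a.1, τ))
        (fun τ i ε => Rτ a.1 τ i ε) a.2 b.2
    have h2 : Q (a.1, b.2) / sgP N c δt s p' h htil J Jtil G1 G2 (a.1, b.2)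
        = Q (b.1, b.2) / sgP N c δt s p' h htil J Jtil G1 G2 (b.1, b.2) :=
      update_const (fun σ => Q (σ, b.2) / sgP N c δt s p' h htil J Jtil G1 G2 (σ, b.2))
        (fun σ i ε => Rσ σ b.2 i ε) a.1 b.1
    simpa using h1.trans h2
  obtain ⟨στ₀⟩ : Nonempty ((Fin N → Bool) × (Fin N → Bool)) := inferInstance
  have hQk : ∀ στ, Q στ = (Q στ₀ / sgP N c δt s p' h htil J Jtil G1 G2 στ₀)
      * sgP N c δt s p' h htil J Jtil G1 G2 στ := fun στ => by
    rw [← hconst στ στ₀, div_mul_cancel₀ _ (hPpos στ).ne']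
  have hk : Q στ₀ / sgP N c δt s p' h htil J Jtil G1 G2 στ₀ = 1 := by
    have h1 : (1:ℝ) = (Q στ₀ / sgP N c δt s p' h htil J Jtil G1 G2 στ₀) := by
      calc (1:ℝ) = ∑ στ : (Fin N → Bool) × (Fin N → Bool), Q στ := hQsum.symm
        _ = ∑ στ : (Fin N → Bool) × (Fin N → Bool),
              (Q στ₀ / sgP N c δt s p' h htil J Jtil G1 G2 στ₀)
                * sgP N c δt s p' h htil J Jtil G1 G2 στ :=
            Finset.sum_congr rfl (fun στ _ => hQk στ)
        _ = (Q στ₀ / sgP N c δt s p' h htil J Jtil G1 G2 στ₀)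
              * ∑ στ : (Fin N → Bool) × (Fin N → Bool),
                  sgP N c δt s p' h htil J Jtil G1 G2 στ := by rw [Finset.mul_sum]
        _ = Q στ₀ / sgP N c δt s p' h htil J Jtil G1 G2 στ₀ := by rw [hPsum, mul_one]
    exact h1.symm
  funext στ
  rw [hQk στ, hk, one_mul]

end
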